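/- Let m ≤ n be positive integers, A ∈ ℝ^{m×n} with rank(A) = m, and L ∈ ℕ. Suppose G : ℝ^n → ℝ^m has the form G(ξ) = Σ_{l=1}^{L} α^(l) ⊙ 𝛔(C^(l)ξ + d^(l)) with α^(l), d^(l) ∈ ℝ^m and C^(l) ∈ ℝ^{m×n} satisfying rank(C^(l)) = m and, when m = n, sgn(det C^(l)) = sgn(det A). Then there exist vectors α^(l) ∈ ℝ^m, matrices β^(l) ∈ ℝ^{n×n}, and vectors γ^(l) ∈ ℝ^n (l = 1,…,L) such that for every ξ ∈ ℝ^n, the sequences defined by x^(0) = ξ, y^(0) = 0, x^(l) = x^(l−1) + β^(l)x^(l−1) + γ^(l), y^(l) = y^(l−1) + α^(l) ⊙ 𝛔(Ax^(l)) for l = 1,…,L satisfy y^(L) = G(ξ). -/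

import Mathlib

section
open Matrix LinearMap

lemma exists_ext {m n : ℕ} (hmn : m ≤ n) (A : Matrix (Fin m) (Fin n) ℝ) (hA : A.rank = m) :
    ∃ B : Matrix (Fin n) (Fin n) ℝ, IsUnit B ∧
      ∀ x : Fin n → ℝ, ∀ i : Fin m, B.mulVec x (Fin.castLE hmn i) = A.mulVec x i := by
  set f := A.mulVecLin with hf
  have hrk : Module.finrank ℝ (range f) = m := by
    rw [Matrix.rank] at hA; exact hA
  have hrange : range f = ⊤ := by
    apply Submodule.eq_top_of_finrank_eq
    rw [hrk]; simp
  obtain ⟨g, hg⟩ := f.exists_rightInverse_of_surjective hrange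
  set K := ker f with hK
  set r := Module.finrank ℝ K with hr
  have hrn : m + r = n := by
    have h1 := f.finrank_range_add_finrank_ker
    rw [hrk] at h1
    simp at h1
    have h2 : Module.finrank ℝ K = Module.finrank ℝ (ker f) := rfl
    omega
  have hmem : ∀ x : Fin n → ℝ, x - g (f x) ∈ K := by
    intro x
    simp only [hK, LinearMap.mem_ker, map_sub]
    have : f (g (f x)) = f x := congrFun (congrArg DFunLike.coe hg) (f x)
    simp [this]
  let p : (Fin n → ℝ) →ₗ[ℝ] K := (LinearMap.id - g ∘ₗ f).codRestrict K hmem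
  let ψ : K ≃ₗ[ℝ] (Fin r → ℝ) := (Module.finBasis ℝ K).equivFun
  let T : (Fin n → ℝ) →ₗ[ℝ] (Fin m → ℝ) × (Fin r → ℝ) := f.prod (ψ.toLinearMap ∘ₗ p)
  have hTinj : Function.Injective T := by
    rw [← LinearMap.ker_eq_bot]
    ext x
    simp only [Submodule.mem_bot, LinearMap.mem_ker, T, LinearMap.prod_apply, Function.prod,
      Prod.mk_eq_zero, LinearMap.comp_apply, LinearEquiv.coe_coe]
    constructor
    · rintro ⟨h1, h2⟩
      have hp0 : p x = 0 := by
        apply ψ.injective; simpa using h2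
      have : (p x : Fin n → ℝ) = 0 := by rw [hp0]; rfl
      simp only [p, LinearMap.codRestrict_apply, LinearMap.sub_apply, LinearMap.id_apply,
        LinearMap.comp_apply] at this
      rw [h1] at this
      simpa using this
    · rintro rfl; simp
  have hdim : Module.finrank ℝ (Fin n → ℝ) = Module.finrank ℝ ((Fin m → ℝ) × (Fin r → ℝ)) := by
    simp [hrn]
  let E1 : (Fin n → ℝ) ≃ₗ[ℝ] (Fin m → ℝ) × (Fin r → ℝ) := T.linearEquivOfInjective hTinj hdim
  let e : Fin m ⊕ Fin r ≃ Fin n := finSumFinEquiv.trans (finCongr hrn)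
  let E2 : ((Fin m → ℝ) × (Fin r → ℝ)) ≃ₗ[ℝ] (Fin n → ℝ) :=
    (LinearEquiv.sumArrowLequivProdArrow (Fin m) (Fin r) ℝ ℝ).symm.trans
      (LinearEquiv.funCongrLeft ℝ ℝ e.symm)
  let E : (Fin n → ℝ) ≃ₗ[ℝ] (Fin n → ℝ) := E1.trans E2
  refine ⟨LinearMap.toMatrix' (E : (Fin n → ℝ) →ₗ[ℝ] (Fin n → ℝ)), ?_, ?_⟩
  · refine (Matrix.isUnit_iff_isUnit_det _).mpr (Matrix.isUnit_det_of_right_inverse (B := LinearMap.toMatrix' (E.symm : (Fin n → ℝ) →ₗ[ℝ] (Fin n → ℝ))) ?_)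
    rw [← LinearMap.toMatrix'_comp]
    simp
  · intro x i
    have hmv : (LinearMap.toMatrix' (E : (Fin n → ℝ) →ₗ[ℝ] (Fin n → ℝ))).mulVec x = E x := by
      rw [← Matrix.toLin'_apply, Matrix.toLin'_toMatrix']
      rfl
    rw [hmv]
    have hesymm : e.symm (Fin.castLE hmn i) = Sum.inl i := by
      apply e.injective
      simp [e]
      apply Fin.ext
      simp
    have h1 : E x (Fin.castLE hmn i) = Sum.elim (E1 x).1 (E1 x).2 (e.symm (Fin.castLE hmn i)) := rfl
    rw [h1, hesymm]
    have h2 : E1 x = T x := T.linearEquivOfInjective_apply hTinj hdim x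
    rw [h2]
    rfl

end

open scoped Matrix



/-- Lemma: exact representation of a ridge-sum by a ResNet. -/
theorem stmt_13 (m n : ℕ) (hm : 0 < m) (hmn : m ≤ n) (σ : ℝ → ℝ)
    (A : Matrix (Fin m) (Fin n) ℝ) (hA : A.rank = m) (L : ℕ) (hL : 0 < L)
    (α d : Fin L → Fin m → ℝ) (C : Fin L → Matrix (Fin m) (Fin n) ℝ)
    (hrank : ∀ l, (C l).rank = m)
    (hsgn : ∀ h : m = n, ∀ l,
      Real.sign ((C l).submatrix id (finCongr h)).det =
        Real.sign (A.submatrix id (finCongr h)).det)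
    (G : (Fin n → ℝ) → Fin m → ℝ)
    (hG : ∀ ξ i, G ξ i = ∑ l, α l i * σ ((C l).mulVec ξ i + d l i)) :
    ∃ (α' : Fin L → Fin m → ℝ) (β : Fin L → Matrix (Fin n) (Fin n) ℝ)
      (γ : Fin L → Fin n → ℝ),
      ∀ ξ : Fin n → ℝ, ∀ (x : Fin (L + 1) → Fin n → ℝ) (y : Fin (L + 1) → Fin m → ℝ),
        x 0 = ξ → y 0 = 0 →
        (∀ l : Fin L, x l.succ = x l.castSucc + (β l).mulVec (x l.castSucc) + γ l) →
        (∀ l : Fin L, ∀ i, y l.succ i = y l.castSucc i + α' l i * σ (A.mulVec (x l.succ) i)) →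
        y (Fin.last L) = G ξ := by
  obtain ⟨Ta, hTau, hTa⟩ := exists_ext hmn A hA
  choose Tc hTcu hTc using fun l => exists_ext hmn (C l) (hrank l)
  set dt : Fin L → Fin n → ℝ := fun l j => if h : (j : ℕ) < m then d l ⟨j, h⟩ else 0 with hdt
  set N : Fin (L + 1) → Matrix (Fin n) (Fin n) ℝ := Fin.cases 1 (fun l => Ta⁻¹ * Tc l) with hN
  set c : Fin (L + 1) → (Fin n → ℝ) := Fin.cases 0 (fun l => Ta⁻¹ *ᵥ dt l) with hc
  have hNu : ∀ k, IsUnit (N k) := by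
    intro k
    induction k using Fin.cases with
    | zero => simp [hN]
    | succ l =>
      simp only [hN, Fin.cases_succ]
      exact (Matrix.isUnit_nonsing_inv_iff.mpr hTau).mul (hTcu l)
  refine ⟨α, fun l => N l.succ * (N l.castSucc)⁻¹ - 1,
    fun l => c l.succ - (N l.succ * (N l.castSucc)⁻¹) *ᵥ c l.castSucc, ?_⟩
  intro ξ x y hx0 hy0 hxr hyr
  have hx : ∀ k, x k = N k *ᵥ ξ + c k := by
    intro k
    induction k using Fin.induction with
    | zero => simp [hN, hc, hx0]
    | succ l ih =>
      rw [hxr l, ih]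
      set M := N l.succ * (N l.castSucc)⁻¹ with hM
      have key : M * N l.castSucc = N l.succ := by
        rw [hM, Matrix.mul_assoc,
          Matrix.nonsing_inv_mul _ ((Matrix.isUnit_iff_isUnit_det _).mp (hNu l.castSucc)),
          Matrix.mul_one]
      have expand : ∀ v : Fin n → ℝ, v + (M - 1) *ᵥ v = M *ᵥ v := by
        intro v
        rw [Matrix.sub_mulVec, Matrix.one_mulVec]
        abel
      rw [expand]
      rw [Matrix.mulVec_add, Matrix.mulVec_mulVec, key]
      beta_reduce
      rw [← hM]
      abel
  have hAx : ∀ l : Fin L, ∀ i, A.mulVec (x l.succ) i = (C l).mulVec ξ i + d l i := by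
    intro l i
    rw [← hTa, hx l.succ]
    have hNs : N l.succ = Ta⁻¹ * Tc l := by simp [hN]
    have hcs : c l.succ = Ta⁻¹ *ᵥ dt l := by simp [hc]
    rw [hNs, hcs, Matrix.mulVec_add, Matrix.mulVec_mulVec, Matrix.mulVec_mulVec,
      ← Matrix.mul_assoc,
      Matrix.mul_nonsing_inv _ ((Matrix.isUnit_iff_isUnit_det _).mp hTau),
      Matrix.one_mul]
    have hdti : dt l (Fin.castLE hmn i) = d l i := by
      simp only [hdt]
      rw [dif_pos (by simpa using i.isLt)]
      exact congrArg (d l) (Fin.ext rfl)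
    rw [Matrix.one_mulVec]
    simp only [Pi.add_apply]
    rw [hTc l ξ i, hdti]
  have hy : ∀ k : Fin (L + 1), ∀ i, y k i =
      ∑ l ∈ Finset.univ.filter (fun l : Fin L => (l : ℕ) < (k : ℕ)),
        α l i * σ ((C l).mulVec ξ i + d l i) := by
    intro k
    induction k using Fin.induction with
    | zero => intro i; simp [hy0]
    | succ l ih =>
      intro i
      rw [hyr l i, ih i, hAx l i]
      have hfil : Finset.univ.filter (fun l' : Fin L => (l' : ℕ) < ((l.succ : Fin (L+1)) : ℕ))
          = insert l (Finset.univ.filter (fun l' : Fin L => (l' : ℕ) < ((l.castSucc : Fin (L+1)) : ℕ))) := by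
        ext l'
        simp only [Finset.mem_filter, Finset.mem_univ, true_and, Finset.mem_insert,
          Fin.val_succ, Fin.coe_castSucc]
        constructor
        · intro h
          rcases Nat.lt_succ_iff_lt_or_eq.mp h with h | h
          · exact Or.inr h
          · exact Or.inl (Fin.ext h)
        · rintro (rfl | h)
          · omega
          · omega
      rw [hfil, Finset.sum_insert (by simp)]
      ring
  funext i
  rw [hy (Fin.last L) i, hG ξ i]
  apply Finset.sum_congr _ (fun _ _ => rfl)
  apply Finset.filter_true_of_mem
  intro l _
  simpa using l.isLt
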